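/- Let n ≥ 1, d ≥ 1, and let Z^(1), …, Z^(n) be d×d Hermitian positive semidefinite complex matrices. Let G be the (nd)×(nd) block matrix with d×d blocks G_{pq} := (Z^(p))^{1/2} (Z^(q))^{1/2}, where M^{1/2} denotes the positive semidefinite square root of a positive semidefinite Hermitian matrix M. Then for every λ ∈ ℂ: det( (λ−1)·Id_{nd} + G ) = (λ−1)^{(n−1)d} · det( λ·Id_d − (Id_d − Σ_{p=1}^n Z^(p)) ). -/

import Mathlib

open Finset Matrix ComplexOrder

namespace Matrix.PosSemidef

/-- The positive semidefinite square root of a positive semidefinite matrix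
(the definition of Mathlib of December 2024, since removed). -/
noncomputable def sqrt {n 𝕜 : Type*} [Fintype n] [RCLike 𝕜] [DecidableEq n]
    {A : Matrix n n 𝕜} (hA : PosSemidef A) : Matrix n n 𝕜 :=
  (hA.1.eigenvectorUnitary : Matrix n n 𝕜) *
    diagonal (((↑) : ℝ → 𝕜) ∘ (√·) ∘ hA.1.eigenvalues) *
    (star hA.1.eigenvectorUnitary : Matrix n n 𝕜)

lemma sqrt_mul_self {n 𝕜 : Type*} [Fintype n] [RCLike 𝕜] [DecidableEq n]
    {A : Matrix n n 𝕜} (hA : PosSemidef A) : hA.sqrt * hA.sqrt = A := by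
  have hU : (star hA.1.eigenvectorUnitary : Matrix n n 𝕜) * hA.1.eigenvectorUnitary = 1 :=
    Unitary.star_mul_self_of_mem hA.1.eigenvectorUnitary.2
  conv_rhs => rw [hA.1.spectral_theorem, Unitary.conjStarAlgAut_apply]
  simp only [sqrt, Matrix.mul_assoc]
  rw [← Matrix.mul_assoc _ (hA.1.eigenvectorUnitary : Matrix n n 𝕜), hU, Matrix.one_mul,
    ← Matrix.mul_assoc (diagonal _) (diagonal _), diagonal_mul_diagonal]
  congr 3
  funext i
  simp only [Function.comp_apply]
  rw [← RCLike.ofReal_mul, Real.mul_self_sqrt (hA.eigenvalues_nonneg i)]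

end Matrix.PosSemidef

lemma aux_det_smul_one_add_mul {m' n' : Type*} [Fintype m'] [Fintype n'] [DecidableEq m']
    [DecidableEq n'] (A : Matrix m' n' ℂ) (B : Matrix n' m' ℂ) {c : ℂ} (hc : c ≠ 0)
    (h : Fintype.card n' ≤ Fintype.card m') :
    (c • 1 + A * B).det = c ^ (Fintype.card m' - Fintype.card n') * (c • 1 + B * A).det := by
  have h1 : c • (1 : Matrix m' m' ℂ) + A * B = c • (1 + (c⁻¹ • A) * B) := by
    rw [smul_add, Matrix.smul_mul, smul_smul, mul_inv_cancel₀ hc, one_smul]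
  have h2 : c • (1 : Matrix n' n' ℂ) + B * A = c • (1 + B * (c⁻¹ • A)) := by
    rw [smul_add, Matrix.mul_smul, smul_smul, mul_inv_cancel₀ hc, one_smul]
  rw [h1, h2, Matrix.det_smul, Matrix.det_smul, Matrix.det_one_add_mul_comm,
    ← mul_assoc, ← pow_add, Nat.sub_add_cancel h]

/-- The Sylvester-type determinant identity for the block matrix
`G_{pq} = (Z^(p))^{1/2} (Z^(q))^{1/2}`:
`det((λ-1)·Id + G) = (λ-1)^{(n-1)d} · det(λ·Id - (Id - Σ Z^(p)))`. -/
theorem stmt_13 (n d : ℕ) (hn : 1 ≤ n) (hd : 1 ≤ d)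
    (Z : Fin n → Matrix (Fin d) (Fin d) ℂ)
    (hZ : ∀ p, (Z p).PosSemidef)
    (lam : ℂ) :
    ((lam - 1) • (1 : Matrix (Fin n × Fin d) (Fin n × Fin d) ℂ)
        + Matrix.of fun pi qj : Fin n × Fin d =>
            ((hZ pi.1).sqrt * (hZ qj.1).sqrt) pi.2 qj.2).det
      = (lam - 1) ^ ((n - 1) * d)
        * (lam • (1 : Matrix (Fin d) (Fin d) ℂ) - (1 - ∑ p, Z p)).det := by
  set A : Matrix (Fin n × Fin d) (Fin d) ℂ := Matrix.of fun pi j => (hZ pi.1).sqrt pi.2 j with hA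
  set B : Matrix (Fin d) (Fin n × Fin d) ℂ := Matrix.of fun j qj => (hZ qj.1).sqrt j qj.2 with hB
  have hG : (Matrix.of fun pi qj : Fin n × Fin d =>
      ((hZ pi.1).sqrt * (hZ qj.1).sqrt) pi.2 qj.2) = A * B := by
    ext pi qj
    simp [Matrix.mul_apply, hA, hB]
  have hBA : B * A = ∑ p, Z p := by
    ext i j
    simp only [Matrix.mul_apply, Matrix.sum_apply, hA, hB, Matrix.of_apply]
    rw [Fintype.sum_prod_type]
    refine Finset.sum_congr rfl fun p _ => ?_
    rw [← (hZ p).sqrt_mul_self]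
    simp [Matrix.mul_apply]
  have hcard : Fintype.card (Fin n × Fin d) = n * d := by simp
  have hcardle : Fintype.card (Fin d) ≤ Fintype.card (Fin n × Fin d) := by
    simp only [Fintype.card_prod, Fintype.card_fin]
    nlinarith
  have key : ∀ lam : ℂ, lam ≠ 1 →
      ((lam - 1) • (1 : Matrix (Fin n × Fin d) (Fin n × Fin d) ℂ) + A * B).det
        = (lam - 1) ^ ((n - 1) * d)
          * (lam • (1 : Matrix (Fin d) (Fin d) ℂ) - (1 - ∑ p, Z p)).det := by
    intro μ hμ
    have hc : μ - 1 ≠ 0 := sub_ne_zero.mpr hμ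
    rw [aux_det_smul_one_add_mul A B hc hcardle, hBA]
    have h1 : μ • (1 : Matrix (Fin d) (Fin d) ℂ) - (1 - ∑ p, Z p)
        = (μ - 1) • 1 + ∑ p, Z p := by
      rw [sub_smul, one_smul]; abel
    have h2 : Fintype.card (Fin n × Fin d) - Fintype.card (Fin d) = (n - 1) * d := by
      simp only [Fintype.card_prod, Fintype.card_fin]
      rw [Nat.sub_mul, one_mul]
    rw [h1, h2]
  rw [hG]
  -- extend to all lam by continuity
  have hcont1 : Continuous fun μ : ℂ =>
      ((μ - 1) • (1 : Matrix (Fin n × Fin d) (Fin n × Fin d) ℂ) + A * B).det := by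
    apply Continuous.matrix_det
    fun_prop
  have hcont2 : Continuous fun μ : ℂ => (μ - 1) ^ ((n - 1) * d)
      * (μ • (1 : Matrix (Fin d) (Fin d) ℂ) - (1 - ∑ p, Z p)).det := by
    apply Continuous.mul (by fun_prop)
    apply Continuous.matrix_det
    fun_prop
  have := Continuous.ext_on (dense_compl_singleton (1 : ℂ)) hcont1 hcont2
    (fun μ hμ => key μ hμ)
  exact congrFun this lam
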